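/- Let β > 0, S ⊆ ℝⁿ, F : ℝⁿ → ℝⁿ, g : ℝⁿ → ℝ, and let x_{k+1}, y_k, y_{k+1}, λ_k ∈ ℝⁿ with x_{k+1} ∈ S; set λ_{k+1} := λ_k + β(x_{k+1} − y_{k+1}). Let x^μ ∈ S and λ^μ ∈ ℝⁿ with y^μ := x^μ. Assume: (a) ⟨F(x_{k+1}) − F(x^μ), x_{k+1} − x^μ⟩ ≥ 0; (b) −λ_k − β(x_{k+1} − y_k) is a subgradient of x ↦ ⟨F(x_{k+1}), x⟩ at x_{k+1} relative to S; (c) λ_k is a subgradient of g at y_k and λ_{k+1} is a subgradient of g at y_{k+1}. Then ⟨F(x^μ), x_{k+1} − x^μ⟩ + g(y_{k+1}) − g(y^μ) + ⟨λ^μ, x_{k+1} − y_{k+1}⟩ ≤ (1/(2β))‖λ_k − λ^μ‖² − (1/(2β))‖λ_{k+1} − λ^μ‖² + (β/2)‖y_k − y^μ‖² − (β/2)‖y_{k+1} − y^μ‖² − (1/(2β))‖λ_{k+1} − λ_k‖² − (β/2)‖y_{k+1} − y_k‖². -/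

import Mathlib

open scoped RealInnerProductSpace

private lemma key' {E : Type*} [NormedAddCommGroup E] [InnerProductSpace ℝ E] (a b c : E) :
    ‖a - c‖^2 - ‖b - c‖^2 - ‖b - a‖^2 = 2 * ⟪a - b, b - c⟫ := by
  simp only [norm_sub_sq_real, inner_sub_left, inner_sub_right, real_inner_self_eq_norm_sq]
  linear_combination 2 * real_inner_comm a b

private lemma keyid {E : Type*} [NormedAddCommGroup E] [InnerProductSpace ℝ E]
    (β : ℝ) (xk1 yk yk1 lamk xμ lamμ : E) :
    -⟪xk1 - yk1, (lamk + β • (xk1 - yk1)) - lamμ⟫ + β * ⟪yk - yk1, yk1 - xμ⟫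
      = -⟪lamk, xk1 - xμ⟫ - β * ⟪xk1 - yk, xk1 - xμ⟫
        + ⟪lamk + β • (xk1 - yk1), yk1 - xμ⟫ + ⟪lamμ, xk1 - yk1⟫
        + β * ⟪xk1 - yk1, yk1 - yk⟫ := by
  simp only [inner_sub_left, inner_sub_right, inner_add_left, inner_add_right,
    real_inner_smul_left, real_inner_smul_right]
  linear_combination (real_inner_comm lamμ xk1 - real_inner_comm lamμ yk1) +
    β * (real_inner_comm yk1 yk - real_inner_comm xk1 yk + real_inner_comm xk1 xμ
      - real_inner_comm yk1 xμ - real_inner_comm yk1 xk1 - real_inner_comm xμ yk1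
      + real_inner_comm xμ xk1) + (real_inner_comm lamk yk1 - real_inner_comm lamk xk1)

/-- Lemma 3.6: one-step descent bound relative to the central-path
point `x^μ = y^μ` with multiplier `λ^μ`. -/
theorem stmt4 {n : ℕ} (β : ℝ) (hβ : 0 < β) (S : Set (EuclideanSpace ℝ (Fin n)))
    (F : EuclideanSpace ℝ (Fin n) → EuclideanSpace ℝ (Fin n))
    (g : EuclideanSpace ℝ (Fin n) → ℝ)
    (xk1 yk yk1 lamk lamk1 xμ lamμ : EuclideanSpace ℝ (Fin n))
    (hxk1 : xk1 ∈ S) (hxμ : xμ ∈ S)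
    (hlam : lamk1 = lamk + β • (xk1 - yk1))
    (hmono : 0 ≤ ⟪F xk1 - F xμ, xk1 - xμ⟫)
    (hfsub : ∀ z ∈ S,
      ⟪F xk1, z⟫ ≥ ⟪F xk1, xk1⟫ + ⟪-lamk - β • (xk1 - yk), z - xk1⟫)
    (hgk : ∀ z, g z ≥ g yk + ⟪lamk, z - yk⟫)
    (hgk1 : ∀ z, g z ≥ g yk1 + ⟪lamk1, z - yk1⟫) :
    ⟪F xμ, xk1 - xμ⟫ + g yk1 - g xμ + ⟪lamμ, xk1 - yk1⟫
      ≤ (1/(2*β)) * ‖lamk - lamμ‖^2 - (1/(2*β)) * ‖lamk1 - lamμ‖^2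
        + (β/2) * ‖yk - xμ‖^2 - (β/2) * ‖yk1 - xμ‖^2
        - (1/(2*β)) * ‖lamk1 - lamk‖^2 - (β/2) * ‖yk1 - yk‖^2 := by
  subst hlam
  set L1 := lamk + β • (xk1 - yk1) with hL1
  -- (i) monotonicity
  have hmono' : ⟪F xμ, xk1 - xμ⟫ ≤ ⟪F xk1, xk1 - xμ⟫ := by
    rw [inner_sub_left] at hmono; linarith
  -- (ii) f-subgradient at x_{k+1}
  have h1 : ⟪F xk1, xk1 - xμ⟫ ≤ -⟪lamk, xk1 - xμ⟫ - β * ⟪xk1 - yk, xk1 - xμ⟫ := by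
    have h := hfsub xμ hxμ
    have e1 : ⟪-lamk - β • (xk1 - yk), xμ - xk1⟫
        = ⟪lamk, xk1 - xμ⟫ + β * ⟪xk1 - yk, xk1 - xμ⟫ := by
      simp only [inner_sub_left, inner_sub_right, inner_neg_left, real_inner_smul_left]
      ring
    have e2 : ⟪F xk1, xk1 - xμ⟫ = ⟪F xk1, xk1⟫ - ⟪F xk1, xμ⟫ := inner_sub_right _ _ _
    rw [e1] at h
    linarith
  -- (iii) g-subgradient at y_{k+1}
  have h2 : g yk1 - g xμ ≤ ⟪L1, yk1 - xμ⟫ := by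
    have h := hgk1 xμ
    have e : ⟪L1, xμ - yk1⟫ = -⟪L1, yk1 - xμ⟫ := by
      simp only [inner_sub_right]; ring
    rw [e] at h
    linarith
  -- (iv) cross term from the two g-subgradients
  have hcross : 0 ≤ β * ⟪xk1 - yk1, yk1 - yk⟫ := by
    have ha := hgk yk1
    have hb := hgk1 yk
    have e : ⟪L1, yk - yk1⟫ = -⟪lamk, yk1 - yk⟫ - β * ⟪xk1 - yk1, yk1 - yk⟫ := by
      simp only [hL1, inner_add_left, inner_sub_right, real_inner_smul_left, inner_sub_left]
      ring
    rw [e] at hb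
    have e2 : ⟪lamk, yk1 - yk⟫ = ⟪lamk, yk1⟫ - ⟪lamk, yk⟫ := inner_sub_right _ _ _
    linarith
  -- rewrite the RHS
  have hβ' : (β : ℝ) ≠ 0 := ne_of_gt hβ
  have hk1 : ‖lamk - lamμ‖^2 - ‖L1 - lamμ‖^2 - ‖L1 - lamk‖^2
      = 2 * ⟪lamk - L1, L1 - lamμ⟫ := key' lamk L1 lamμ
  have hk2 : ‖yk - xμ‖^2 - ‖yk1 - xμ‖^2 - ‖yk1 - yk‖^2
      = 2 * ⟪yk - yk1, yk1 - xμ⟫ := key' yk yk1 xμ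
  have hs : ⟪lamk - L1, L1 - lamμ⟫ = -(β * ⟪xk1 - yk1, L1 - lamμ⟫) := by
    have : lamk - L1 = -(β • (xk1 - yk1)) := by rw [hL1]; abel
    rw [this, inner_neg_left, real_inner_smul_left]
  have hR : (1/(2*β)) * ‖lamk - lamμ‖^2 - (1/(2*β)) * ‖L1 - lamμ‖^2
        + (β/2) * ‖yk - xμ‖^2 - (β/2) * ‖yk1 - xμ‖^2
        - (1/(2*β)) * ‖L1 - lamk‖^2 - (β/2) * ‖yk1 - yk‖^2
      = -⟪xk1 - yk1, L1 - lamμ⟫ + β * ⟪yk - yk1, yk1 - xμ⟫ := by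
    have expand : (1/(2*β)) * ‖lamk - lamμ‖^2 - (1/(2*β)) * ‖L1 - lamμ‖^2
          + (β/2) * ‖yk - xμ‖^2 - (β/2) * ‖yk1 - xμ‖^2
          - (1/(2*β)) * ‖L1 - lamk‖^2 - (β/2) * ‖yk1 - yk‖^2
        = (1/(2*β)) * (‖lamk - lamμ‖^2 - ‖L1 - lamμ‖^2 - ‖L1 - lamk‖^2)
          + (β/2) * (‖yk - xμ‖^2 - ‖yk1 - xμ‖^2 - ‖yk1 - yk‖^2) := by ring
    rw [expand, hk1, hk2, hs]
    field_simp
  rw [hR, hL1, keyid β xk1 yk yk1 lamk xμ lamμ]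
  linarith
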